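/- Let a, b, c > 0 satisfy the triangle inequalities with a < b, and suppose a + b + c < 2π and the triangle fits in an open hemisphere. Let S be the area of the spherical triangle with sides a, b, c and S′ the area of the spherical isosceles triangle with sides (a+b)/2, (a+b)/2, c. Then S < S′. -/

import Mathlib

open Real

set_option maxHeartbeats 1000000

/-- Spherical (great-circle) distance between points of the unit sphere in `ℝ³`. -/
noncomputable def sdist (u v : EuclideanSpace ℝ (Fin 3)) : ℝ :=
  Real.arccos (inner ℝ u v : ℝ)

/-- The area of the spherical triangle with side lengths `a, b, c`, computed via
Lhuilier's formula `tan²(S/4) = tan(s/2)·tan((s-a)/2)·tan((s-b)/2)·tan((s-c)/2)`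
with `s = (a+b+c)/2`. -/
noncomputable def sLhuilierArea (a b c : ℝ) : ℝ :=
  4 * Real.arctan (Real.sqrt (Real.tan ((a + b + c) / 4) * Real.tan ((b + c - a) / 4) *
    Real.tan ((c + a - b) / 4) * Real.tan ((a + b - c) / 4)))

/-- For `x, y ∈ (0, π/2)` with `x + y < π/2` and `x ≠ y`,
`tan x * tan y < tan ((x+y)/2) ^ 2`. -/
lemma tan_mul_tan_lt_tan_avg_sq {x y : ℝ} (hx : 0 < x) (hy : 0 < y)
    (hxy : x + y < π / 2) (hne : x ≠ y) :
    Real.tan x * Real.tan y < Real.tan ((x + y) / 2) ^ 2 := by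
  have hpi := Real.pi_pos
  have hcx : 0 < Real.cos x := Real.cos_pos_of_mem_Ioo ⟨by linarith, by linarith⟩
  have hcy : 0 < Real.cos y := Real.cos_pos_of_mem_Ioo ⟨by linarith, by linarith⟩
  have hcm : 0 < Real.cos ((x + y) / 2) :=
    Real.cos_pos_of_mem_Ioo ⟨by linarith, by linarith⟩
  have hC : 0 < Real.cos (x + y) :=
    Real.cos_pos_of_mem_Ioo ⟨by linarith, hxy⟩
  have hd1 : Real.cos (x - y) < 1 := by
    refine lt_of_le_of_ne (Real.cos_le_one _) fun h => hne ?_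
    have := (Real.cos_eq_one_iff_of_lt_of_lt (x := x - y) (by linarith) (by linarith)).mp h
    linarith
  rw [Real.tan_eq_sin_div_cos, Real.tan_eq_sin_div_cos, Real.tan_eq_sin_div_cos,
    div_mul_div_comm, div_pow, div_lt_div_iff₀ (by positivity) (by positivity)]
  have e1 : Real.sin x * Real.sin y = (Real.cos (x - y) - Real.cos (x + y)) / 2 := by
    rw [Real.cos_sub, Real.cos_add]; ring
  have e2 : Real.cos x * Real.cos y = (Real.cos (x - y) + Real.cos (x + y)) / 2 := by
    rw [Real.cos_sub, Real.cos_add]; ring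
  have e3 : Real.cos ((x + y) / 2) ^ 2 = (1 + Real.cos (x + y)) / 2 := by
    have := Real.cos_sq ((x + y) / 2)
    rw [show 2 * ((x + y) / 2) = x + y by ring] at this
    linarith
  have e4 : Real.sin ((x + y) / 2) ^ 2 = (1 - Real.cos (x + y)) / 2 := by
    have := Real.sin_sq_add_cos_sq ((x + y) / 2)
    linarith [e3]
  rw [e1, e2, e3, e4]
  nlinarith [mul_pos hC (sub_pos.mpr hd1)]

/-- Averaging two unequal sides of a spherical triangle (in an open hemisphere), keeping the
third side fixed, strictly increases the area. -/
theorem spherical_average_increases_area (a b c : ℝ)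
    (ha : 0 < a) (hb : 0 < b) (hc : 0 < c) (hab : a < b)
    (htri₁ : a + b > c) (htri₂ : b + c > a) (htri₃ : c + a > b)
    (hperi : a + b + c < 2 * π)
    (hhemi : ∃ u v w p : EuclideanSpace ℝ (Fin 3),
      ‖u‖ = 1 ∧ ‖v‖ = 1 ∧ ‖w‖ = 1 ∧ ‖p‖ = 1 ∧
      sdist u v = a ∧ sdist v w = b ∧ sdist w u = c ∧
      0 < (inner ℝ p u : ℝ) ∧ 0 < (inner ℝ p v : ℝ) ∧ 0 < (inner ℝ p w : ℝ)) :
    sLhuilierArea a b c < sLhuilierArea ((a + b) / 2) ((a + b) / 2) c := by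
  have hpi := Real.pi_pos
  -- From the hemisphere condition, `c < π`.
  obtain ⟨u, v, w, p, hu, hv, hw, hp, -, -, hwu, hpu, -, hpw⟩ := hhemi
  have hwu' : Real.arccos (inner ℝ w u : ℝ) = c := hwu
  have hcπ : c < π := by
    rcases lt_or_eq_of_le (hwu' ▸ Real.arccos_le_pi (inner ℝ w u : ℝ)) with h | h
    · exact h
    · exfalso
      have habs : |(inner ℝ w u : ℝ)| ≤ 1 := by
        have := abs_real_inner_le_norm w u
        rwa [hw, hu, one_mul] at this
      have habs' := abs_le.mp habs
      have hcos : (inner ℝ w u : ℝ) = -1 := by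
        have harc : Real.arccos (inner ℝ w u : ℝ) = π := by rw [hwu', h]
        have : Real.cos (Real.arccos (inner ℝ w u : ℝ)) = Real.cos π := by rw [harc]
        rw [Real.cos_arccos (by linarith) (by linarith), Real.cos_pi] at this
        exact this
      have hwu0 : w + u = 0 := by
        have hn : ‖w + u‖ ^ 2 = 0 := by
          rw [norm_add_sq_real, hw, hu, hcos]; ring
        have := sq_eq_zero_iff.mp hn
        exact norm_eq_zero.mp this
      have : w = -u := by
        have := hwu0
        rw [add_eq_zero_iff_eq_neg] at this
        exact this
      rw [this, inner_neg_right] at hpw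
      linarith
  -- Abbreviations for the quarter quantities.
  set s := (a + b + c) / 4 with hs
  set x := (b + c - a) / 4 with hx
  set y := (c + a - b) / 4 with hy
  set z := (a + b - c) / 4 with hz
  have hs0 : 0 < s := by simp only [hs]; linarith
  have hs2 : s < π / 2 := by simp only [hs]; linarith
  have hx0 : 0 < x := by simp only [hx]; linarith
  have hy0 : 0 < y := by simp only [hy]; linarith
  have hz0 : 0 < z := by simp only [hz]; linarith
  have hz2 : z < π / 2 := by simp only [hz]; linarith
  have hxy : x + y < π / 2 := by simp only [hx, hy]; linarith
  have hts : 0 < Real.tan s := Real.tan_pos_of_pos_of_lt_pi_div_two hs0 hs2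
  have htx : 0 < Real.tan x := Real.tan_pos_of_pos_of_lt_pi_div_two hx0 (by linarith)
  have hty : 0 < Real.tan y := Real.tan_pos_of_pos_of_lt_pi_div_two hy0 (by linarith)
  have htz : 0 < Real.tan z := Real.tan_pos_of_pos_of_lt_pi_div_two hz0 hz2
  have hkey : Real.tan x * Real.tan y < Real.tan ((x + y) / 2) ^ 2 :=
    tan_mul_tan_lt_tan_avg_sq hx0 hy0 hxy (by simp only [hx, hy]; intro h; nlinarith)
  have hm : (x + y) / 2 = c / 4 := by simp only [hx, hy]; ring
  rw [hm] at hkey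
  have htm : 0 < Real.tan (c / 4) :=
    Real.tan_pos_of_pos_of_lt_pi_div_two (by linarith) (by linarith)
  unfold sLhuilierArea
  have harg1 : ((a + b) / 2 + (a + b) / 2 + c) / 4 = s := by simp only [hs]; ring
  have harg2 : ((a + b) / 2 + c - (a + b) / 2) / 4 = c / 4 := by ring
  have harg3 : (c + (a + b) / 2 - (a + b) / 2) / 4 = c / 4 := by ring
  have harg4 : ((a + b) / 2 + (a + b) / 2 - c) / 4 = z := by simp only [hz]; ring
  rw [harg1, harg2, harg3, harg4,
    show (a + b + c) / 4 = s from hs.symm, show (b + c - a) / 4 = x from hx.symm,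
    show (c + a - b) / 4 = y from hy.symm, show (a + b - c) / 4 = z from hz.symm]
  have hprod : Real.tan s * Real.tan x * Real.tan y * Real.tan z <
      Real.tan s * Real.tan (c / 4) * Real.tan (c / 4) * Real.tan z := by
    have h := mul_lt_mul_of_pos_left hkey (mul_pos hts htz)
    calc Real.tan s * Real.tan x * Real.tan y * Real.tan z
        = Real.tan s * Real.tan z * (Real.tan x * Real.tan y) := by ring
      _ < Real.tan s * Real.tan z * Real.tan (c / 4) ^ 2 := h
      _ = Real.tan s * Real.tan (c / 4) * Real.tan (c / 4) * Real.tan z := by ring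
  have h4 : (0:ℝ) < 4 := by norm_num
  apply (mul_lt_mul_iff_right₀ h4).mpr
  apply Real.arctan_strictMono
  exact Real.sqrt_lt_sqrt (by positivity) hprod
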